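/- Let a_1,…,a_n be positive integers with ∑ a_i = 2·T. Let the physical network be the path on positions 0,1,…,n, where every edge has capacity T. Let the virtual network be a star with a center c and n leaves, the edge to leaf i having demand a_i. Then there exists a subset S ⊆ {1,…,n} with ∑_{i ∈ S} a_i = T if and only if there exists a bijection f from {c, leaf_1, …, leaf_n} to {0,1,…,n} such that for every k ∈ {0,…,n−1}, ∑ of a_i over all leaves i with min(f(leaf_i), f(c)) ≤ k < max(f(leaf_i), f(c)) is at most T. (This is the correctness of the reduction of the partition problem showing that cVNE of a star virtual network on a linear physical network is NP-complete.) -/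

import Mathlib

open Classical Finset

/-- Correctness of the reduction of the partition problem showing
that cVNE of a star virtual network on a linear physical network is NP-complete.

Physical network: the path on positions `0,…,n`, each edge `{k, k+1}` of capacity
`T`.  Virtual network: a star with center `c` (index `0`) and `n` leaves (indices
`1..n`), the edge to leaf `i` having demand `aᵢ`; the virtual edge to leaf `i` is
routed along the segment between `f i` and `f 0`, so it loads edge `{k, k+1}` iff
`min (f i) (f 0) ≤ k < max (f i) (f 0)`.

The numbers `a₁,…,a_n` (with `∑ aᵢ = 2T`) admit a subset summing to `T` iff there is
a capacity-feasible embedding. -/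
theorem partition_iff_star_on_line_cVNE (n T : ℕ) (hn : 1 ≤ n)
    (a : ℕ → ℕ) (ha : ∀ i ∈ Finset.Icc 1 n, 1 ≤ a i)
    (hsum : ∑ i ∈ Finset.Icc 1 n, a i = 2 * T) :
    (∃ S ⊆ Finset.Icc 1 n, ∑ i ∈ S, a i = T) ↔
    (∃ f : ℕ → ℕ, Set.BijOn f (Set.Icc 0 n) (Set.Icc 0 n) ∧
      ∀ k < n,
        (∑ i ∈ Finset.Icc 1 n,
          if min (f i) (f 0) ≤ k ∧ k < max (f i) (f 0) then a i else 0) ≤ T) := by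
  constructor
  · rintro ⟨S, hSsub, hSsum⟩
    classical
    set m := S.card with hm
    have hmn : m ≤ n := by
      have h1 := Finset.card_le_card hSsub
      have h2 : (Finset.Icc 1 n).card = n := by
        rw [Nat.card_Icc]; omega
      omega
    have hcard1 : S.card = (Finset.range m).card := by simp [hm]
    have hcard2 : ((Finset.Icc 1 n) \ S).card = (Finset.Icc (m+1) n).card := by
      rw [Finset.card_sdiff_of_subset hSsub, Nat.card_Icc, Nat.card_Icc]
      omega
    set e₁ := Finset.equivOfCardEq hcard1 with he₁
    set e₂ := Finset.equivOfCardEq hcard2 with he₂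
    set f : ℕ → ℕ := fun i =>
      if h0 : i = 0 then m
      else if hs : i ∈ S then (e₁ ⟨i, hs⟩ : ℕ)
      else if hc : i ∈ (Finset.Icc 1 n) \ S then (e₂ ⟨i, hc⟩ : ℕ)
      else i with hf
    have hf0 : f 0 = m := by simp [hf]
    have hSne : ∀ i ∈ S, i ≠ 0 := by
      intro i hi
      have := Finset.mem_Icc.mp (hSsub hi)
      omega
    have hfSval : ∀ i (hi : i ∈ S), f i = (e₁ ⟨i, hi⟩ : ℕ) := by
      intro i hi
      simp only [hf]
      rw [dif_neg (hSne i hi), dif_pos hi]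
    have hfS : ∀ i ∈ S, f i < m := by
      intro i hi
      rw [hfSval i hi]
      exact Finset.mem_range.mp (e₁ ⟨i, hi⟩).2
    have hfCval : ∀ i (hi : i ∈ (Finset.Icc 1 n) \ S), f i = (e₂ ⟨i, hi⟩ : ℕ) := by
      intro i hi
      rcases Finset.mem_sdiff.mp hi with ⟨hi1, hns⟩
      have hne : i ≠ 0 := by
        have := Finset.mem_Icc.mp hi1; omega
      simp only [hf]
      rw [dif_neg hne, dif_neg hns, dif_pos hi]
    have hfC : ∀ i ∈ (Finset.Icc 1 n) \ S, m + 1 ≤ f i ∧ f i ≤ n := by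
      intro i hi
      rw [hfCval i hi]
      exact Finset.mem_Icc.mp (e₂ ⟨i, hi⟩).2
    have htri : ∀ x ∈ Set.Icc 0 n, x = 0 ∨ x ∈ S ∨ x ∈ (Finset.Icc 1 n) \ S := by
      intro x hx
      rcases Nat.eq_zero_or_pos x with h | h
      · exact Or.inl h
      · by_cases hs : x ∈ S
        · exact Or.inr (Or.inl hs)
        · exact Or.inr (Or.inr (Finset.mem_sdiff.mpr
            ⟨Finset.mem_Icc.mpr ⟨h, hx.2⟩, hs⟩))
    have hmaps : Set.MapsTo f (Set.Icc 0 n) (Set.Icc 0 n) := by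
      intro x hx
      rcases htri x hx with h | h | h
      · subst h; rw [hf0]; exact Set.mem_Icc.mpr ⟨Nat.zero_le _, hmn⟩
      · exact Set.mem_Icc.mpr ⟨Nat.zero_le _, le_trans (le_of_lt (hfS x h)) hmn⟩
      · exact Set.mem_Icc.mpr ⟨Nat.zero_le _, (hfC x h).2⟩
    have hinj : Set.InjOn f (Set.Icc 0 n) := by
      intro x hx y hy hxy
      rcases htri x hx with h1 | h1 | h1 <;> rcases htri y hy with h2 | h2 | h2
      · omega
      · subst h1; rw [hf0] at hxy; have := hfS y h2; omega
      · subst h1; rw [hf0] at hxy; have := hfC y h2; omega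
      · subst h2; rw [hf0] at hxy; have := hfS x h1; omega
      · rw [hfSval x h1, hfSval y h2] at hxy
        have h := e₁.injective (Subtype.coe_injective hxy)
        simpa using h
      · have := hfS x h1; have := hfC y h2; omega
      · subst h2; rw [hf0] at hxy; have := hfC x h1; omega
      · have := hfS y h2; have := hfC x h1; omega
      · rw [hfCval x h1, hfCval y h2] at hxy
        have h := e₂.injective (Subtype.coe_injective hxy)
        simpa using h
    have hbij : Set.BijOn f (Set.Icc 0 n) (Set.Icc 0 n) :=
      (Set.Finite.injOn_iff_bijOn_of_mapsTo (Set.finite_Icc _ _) hmaps).mp hinj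
    refine ⟨f, hbij, ?_⟩
    intro k hk
    by_cases hkm : k < m
    · calc (∑ i ∈ Finset.Icc 1 n,
          if min (f i) (f 0) ≤ k ∧ k < max (f i) (f 0) then a i else 0)
          ≤ ∑ i ∈ Finset.Icc 1 n, (if i ∈ S then a i else 0) := by
            apply Finset.sum_le_sum
            intro i hi
            by_cases hs : i ∈ S
            · rw [if_pos hs]
              split_ifs <;> simp
            · rw [if_neg hs, if_neg]
              have hic : i ∈ (Finset.Icc 1 n) \ S := Finset.mem_sdiff.mpr ⟨hi, hs⟩
              have h1 := hfC i hic
              rw [hf0]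
              omega
      _ = ∑ i ∈ S, a i := by
            rw [Finset.sum_ite_mem, Finset.inter_eq_right.mpr hSsub]
      _ = T := hSsum
    · have hcompl : ∑ i ∈ (Finset.Icc 1 n) \ S, a i = T := by
        have := Finset.sum_sdiff (f := a) hSsub
        omega
      calc (∑ i ∈ Finset.Icc 1 n,
          if min (f i) (f 0) ≤ k ∧ k < max (f i) (f 0) then a i else 0)
          ≤ ∑ i ∈ Finset.Icc 1 n, (if i ∈ (Finset.Icc 1 n) \ S then a i else 0) := by
            apply Finset.sum_le_sum
            intro i hi
            by_cases hs : i ∈ S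
            · rw [if_neg]
              · split_ifs <;> simp
              · have h1 := hfS i hs
                rw [hf0]
                omega
            · rw [if_pos (Finset.mem_sdiff.mpr ⟨hi, hs⟩)]
              split_ifs <;> simp
      _ = ∑ i ∈ (Finset.Icc 1 n) \ S, a i := by
            rw [Finset.sum_ite_mem,
              Finset.inter_eq_right.mpr (Finset.sdiff_subset)]
      _ = T := hcompl
  · rintro ⟨f, hbij, hload⟩
    classical
    set c := f 0 with hc
    have h0mem : (0 : ℕ) ∈ Set.Icc 0 n := Set.mem_Icc.mpr ⟨le_refl 0, Nat.zero_le n⟩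
    have hcn : c ≤ n := (Set.mem_Icc.mp (hbij.mapsTo h0mem)).2
    have hmem : ∀ i ∈ Finset.Icc 1 n, (i : ℕ) ∈ Set.Icc 0 n := by
      intro i hi
      have := Finset.mem_Icc.mp hi
      exact Set.mem_Icc.mpr ⟨Nat.zero_le _, this.2⟩
    have hfle : ∀ i ∈ Finset.Icc 1 n, f i ≤ n := by
      intro i hi
      exact (Set.mem_Icc.mp (hbij.mapsTo (hmem i hi))).2
    have hfnec : ∀ i ∈ Finset.Icc 1 n, f i ≠ c := by
      intro i hi heq
      have := hbij.injOn (hmem i hi) h0mem heq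
      have := Finset.mem_Icc.mp hi
      omega
    set S := (Finset.Icc 1 n).filter (fun i => f i < c) with hS
    have hSsub : S ⊆ Finset.Icc 1 n := Finset.filter_subset _ _
    set A := ∑ i ∈ S, a i with hA
    set B := ∑ i ∈ (Finset.Icc 1 n) \ S, a i with hB
    have hAB : B + A = 2 * T := by
      rw [hA, hB, Finset.sum_sdiff hSsub, hsum]
    have hA1 : 1 ≤ c → A ≤ T := by
      intro h1
      have hk := hload (c - 1) (by omega)
      calc A = ∑ i ∈ Finset.Icc 1 n, (if i ∈ S then a i else 0) := by
              rw [Finset.sum_ite_mem, Finset.inter_eq_right.mpr hSsub]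
        _ ≤ ∑ i ∈ Finset.Icc 1 n,
              (if min (f i) (f 0) ≤ c - 1 ∧ c - 1 < max (f i) (f 0) then a i else 0) := by
              apply Finset.sum_le_sum
              intro i hi
              by_cases hs : i ∈ S
              · have hlt : f i < c := (Finset.mem_filter.mp hs).2
                rw [if_pos hs, if_pos]
                rw [← hc]
                omega
              · rw [if_neg hs]; exact Nat.zero_le _
        _ ≤ T := hk
    have hB1 : c < n → B ≤ T := by
      intro h1
      have hk := hload c h1
      calc B = ∑ i ∈ Finset.Icc 1 n, (if i ∈ (Finset.Icc 1 n) \ S then a i else 0) := by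
              rw [Finset.sum_ite_mem,
                Finset.inter_eq_right.mpr (Finset.sdiff_subset)]
        _ ≤ ∑ i ∈ Finset.Icc 1 n,
              (if min (f i) (f 0) ≤ c ∧ c < max (f i) (f 0) then a i else 0) := by
              apply Finset.sum_le_sum
              intro i hi
              by_cases hs : i ∈ (Finset.Icc 1 n) \ S
              · rcases Finset.mem_sdiff.mp hs with ⟨hi1, hns⟩
                have hnlt : ¬ f i < c := by
                  intro h
                  exact hns (Finset.mem_filter.mpr ⟨hi1, h⟩)
                have hne := hfnec i hi1
                rw [if_pos hs, if_pos]
                rw [← hc]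
                omega
              · rw [if_neg hs]; exact Nat.zero_le _
        _ ≤ T := hk
    have hA0 : c = 0 → A = 0 := by
      intro h0
      rw [hA]
      apply Finset.sum_eq_zero
      intro i hi
      have : f i < c := (Finset.mem_filter.mp hi).2
      omega
    have hB0 : c = n → B = 0 := by
      intro h0
      rw [hB]
      apply Finset.sum_eq_zero
      intro i hi
      rcases Finset.mem_sdiff.mp hi with ⟨hi1, hns⟩
      have hnlt : ¬ f i < c := by
        intro h
        exact hns (Finset.mem_filter.mpr ⟨hi1, h⟩)
      have := hfle i hi1
      have := hfnec i hi1
      omega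
    refine ⟨S, hSsub, ?_⟩
    show A = T
    rcases Nat.eq_zero_or_pos c with h0 | h0
    · have h1 := hA0 h0
      have h2 := hB1 (by omega)
      omega
    · rcases eq_or_lt_of_le hcn with he | hlt
      · have h1 := hB0 he
        have h2 := hA1 h0
        omega
      · have h1 := hA1 h0
        have h2 := hB1 hlt
        omega
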